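/- There does not exist a pair of orthogonal 7-cycle systems of order 7: no two partitions of the edge set of the complete graph K_7 into cycles of length 7 can have the property that every cycle of the first partition shares at most one edge with every cycle of the second partition. -/

import Mathlib

/-- A set of edges `C` forms a cycle of length `l`: there is a graph and a closed walk
which is a cycle, has length `l`, and whose edge set is exactly `C`. -/
def IsCycleEdgeSet {V : Type*} (l : ℕ) (C : Set (Sym2 V)) : Prop :=
  ∃ (G : SimpleGraph V) (x : V) (w : G.Walk x x),
    w.IsCycle ∧ w.length = l ∧ C = {e | e ∈ w.edges}

/-- `D` is a decomposition of the edge set of `G` into cycles of length `l`: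
each member of `D` is the edge set of an `l`-cycle contained in `G`, and every
edge of `G` lies in exactly one member of `D`. -/
def IsCycleDecomposition {V : Type*} (G : SimpleGraph V) (l : ℕ)
    (D : Set (Set (Sym2 V))) : Prop :=
  (∀ C ∈ D, IsCycleEdgeSet l C ∧ C ⊆ G.edgeSet) ∧
  (∀ e ∈ G.edgeSet, ∃! C, C ∈ D ∧ e ∈ C)

/-- Two cycle decompositions are orthogonal if any member of the first and any member
of the second share at most one edge. -/
def OrthogonalDecompositions {V : Type*} (D₁ D₂ : Set (Set (Sym2 V))) : Prop :=
  ∀ C₁ ∈ D₁, ∀ C₂ ∈ D₂, (C₁ ∩ C₂).Subsingleton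

open Set

lemma ncard_of_cycleEdgeSet {V : Type*} {l : ℕ} {C : Set (Sym2 V)}
    (h : IsCycleEdgeSet l C) : C.ncard = l := by
  classical
  obtain ⟨G, x, w, hc, hl, hC⟩ := h
  subst hC
  have h1 : {e | e ∈ w.edges} = ↑w.edges.toFinset := by ext e; simp
  rw [h1, ncard_coe_finset, List.toFinset_card_of_nodup hc.edges_nodup,
    SimpleGraph.Walk.length_edges, hl]

theorem no_orthogonal_seven_cycle_systems_order_seven :
    ¬ ∃ D₁ D₂ : Set (Set (Sym2 (Fin 7))),
      IsCycleDecomposition (⊤ : SimpleGraph (Fin 7)) 7 D₁ ∧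
      IsCycleDecomposition (⊤ : SimpleGraph (Fin 7)) 7 D₂ ∧
      OrthogonalDecompositions D₁ D₂ := by
  classical
  rintro ⟨D₁, D₂, ⟨h1c, h1u⟩, ⟨h2c, h2u⟩, horth⟩
  -- the edge set of K_7 has 21 edges
  have hE : ((⊤ : SimpleGraph (Fin 7)).edgeSet).ncard = 21 := by
    rw [Set.ncard_eq_toFinset_card']; decide
  -- pick a cycle C₁ in D₁
  have he0 : s(0, 1) ∈ (⊤ : SimpleGraph (Fin 7)).edgeSet := by decide
  obtain ⟨C₁, ⟨hC₁, _⟩, -⟩ := h1u _ he0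
  have hcard₁ : C₁.ncard = 7 := ncard_of_cycleEdgeSet (h1c C₁ hC₁).1
  -- map each edge of C₁ to the unique cycle of D₂ containing it
  have hmem : ∀ e ∈ C₁, e ∈ (⊤ : SimpleGraph (Fin 7)).edgeSet := fun e he =>
    (h1c C₁ hC₁).2 he
  choose! f hf using fun e (he : e ∈ C₁) => (h2u e (hmem e he)).exists
  have hfinj : InjOn f C₁ := by
    intro a ha b hb hab
    by_contra hne
    have hsub := horth C₁ hC₁ (f a) (hf a ha).1
    have : a = b := hsub ⟨ha, (hf a ha).2⟩ ⟨hb, hab ▸ (hf b hb).2⟩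
    exact hne this
  have h7le : (7 : ℕ) ≤ D₂.ncard := by
    have h' : C₁.ncard ≤ D₂.ncard :=
      ncard_le_ncard_of_injOn f (fun a ha => (hf a ha).1) hfinj (Set.toFinite _)
    omega
  -- D₂ partitions the 21 edges into 7-edge cycles, so |D₂| = 3
  set F : Finset (Set (Sym2 (Fin 7))) := D₂.toFinite.toFinset with hF
  have hFcard : F.card = D₂.ncard := (Set.ncard_eq_toFinset_card D₂ D₂.toFinite).symm
  set g : Set (Sym2 (Fin 7)) → Finset (Sym2 (Fin 7)) := fun C => C.toFinite.toFinset with hg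
  have hdisj : ∀ C ∈ F, ∀ C' ∈ F, C ≠ C' → Disjoint (g C) (g C') := by
    intro C hC C' hC' hne
    rw [Finset.disjoint_left]
    intro e heC heC'
    simp only [hg, Set.Finite.mem_toFinset] at heC heC'
    have hCm : C ∈ D₂ := by simpa [hF] using hC
    have hC'm : C' ∈ D₂ := by simpa [hF] using hC'
    obtain ⟨C0, -, huniq⟩ := h2u e ((h2c C hCm).2 heC)
    exact hne ((huniq C ⟨hCm, heC⟩).trans (huniq C' ⟨hC'm, heC'⟩).symm)
  have hunion : F.biUnion g = ((⊤ : SimpleGraph (Fin 7)).edgeSet).toFinset := by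
    ext e
    simp only [Finset.mem_biUnion, Set.mem_toFinset, hg, hF, Set.Finite.mem_toFinset]
    constructor
    · rintro ⟨C, hC, he⟩
      exact (h2c C hC).2 he
    · intro he
      obtain ⟨C, ⟨hC, heC⟩, -⟩ := h2u e he
      exact ⟨C, hC, heC⟩
  have hsum : (F.biUnion g).card = ∑ C ∈ F, (g C).card := Finset.card_biUnion hdisj
  have hgcard : ∀ C ∈ F, (g C).card = 7 := by
    intro C hC
    have hCm : C ∈ D₂ := by simpa [hF] using hC
    have := ncard_of_cycleEdgeSet (h2c C hCm).1
    rwa [Set.ncard_eq_toFinset_card C C.toFinite] at this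
  have h21 : ((⊤ : SimpleGraph (Fin 7)).edgeSet).toFinset.card = 21 := by
    rw [← Set.ncard_eq_toFinset_card']; exact hE
  rw [hunion, h21, Finset.sum_congr rfl hgcard, Finset.sum_const, smul_eq_mul] at hsum
  omega
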